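/- In the free abelian group on generators x_{ij} for 1 ≤ i < j ≤ 4, equipped with the bilinear form making the x_{ij} orthogonal with x_{ij}·x_{ij} = −1, the subgroup of cycles (kernel of the map x_{ij} ↦ y_i + y_j into the free abelian group on y_1,...,y_4) is free of rank 2, generated by α = x_{12}+x_{34}−x_{13}−x_{24} and β = x_{14}+x_{23}−x_{12}−x_{34}, and the Gram matrix of the form restricted to (α, β) is [[−4, 2], [2, −4]], which is negative definite. -/
import Mathlib


/-- Standard basis of `ℤ^6`; coordinates `0,…,5` correspond to the 2-handle classes
`x_{12}, x_{13}, x_{14}, x_{23}, x_{24}, x_{34}`. -/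
def xb (i : Fin 6) : Fin 6 → ℤ := Pi.single i 1

/-- The boundary matrix: `x_{ij} ↦ y_i + y_j` (rows `y_1,…,y_4`, columns the pairs). -/
def bdry : Matrix (Fin 4) (Fin 6) ℤ :=
  !![1,1,1,0,0,0; 1,0,0,1,1,0; 0,1,0,1,0,1; 0,0,1,0,1,1]

/-- The form making the `x_{ij}` orthogonal of square `-1`. -/
def Bform (v w : Fin 6 → ℤ) : ℤ := -∑ i, v i * w i

noncomputable def alphaT2 : Fin 6 → ℤ := xb 0 + xb 5 - xb 1 - xb 4
noncomputable def betaT2 : Fin 6 → ℤ := xb 2 + xb 3 - xb 0 - xb 5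

@[simp] lemma cons_val_five {α : Type*} (x : α) (u : Fin 5 → α) :
    Matrix.vecCons x u 5 = u 4 := rfl

lemma alpha_eq : alphaT2 = ![1,-1,0,0,-1,1] := by
  funext i; fin_cases i <;> simp [alphaT2, xb, Pi.single_apply]

lemma beta_eq : betaT2 = ![-1,0,1,1,0,-1] := by
  funext i; fin_cases i <;> simp [betaT2, xb, Pi.single_apply]

/-- The group of 2-cycles of the handlebody of `T_2` is free of rank 2, generated by
`α = x_{12}+x_{34}-x_{13}-x_{24}` and `β = x_{14}+x_{23}-x_{12}-x_{34}`, with Gram matrix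
`[[-4,2],[2,-4]]`, which is negative definite. -/
theorem stmt7 :
    LinearMap.ker bdry.mulVecLin = Submodule.span ℤ {alphaT2, betaT2} ∧
    LinearIndependent ℤ ![alphaT2, betaT2] ∧
    Bform alphaT2 alphaT2 = -4 ∧ Bform alphaT2 betaT2 = 2 ∧
    Bform betaT2 alphaT2 = 2 ∧ Bform betaT2 betaT2 = -4 ∧
    (∀ a b : ℤ, a ≠ 0 ∨ b ≠ 0 →
      Bform (a • alphaT2 + b • betaT2) (a • alphaT2 + b • betaT2) < 0) := by
  refine ⟨?_, ?_, ?_, ?_, ?_, ?_, ?_⟩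
  · apply le_antisymm
    · intro v hv
      simp only [LinearMap.mem_ker, Matrix.mulVecLin_apply] at hv
      have h0 := congrFun hv 0
      have h1 := congrFun hv 1
      have h2 := congrFun hv 2
      have h3 := congrFun hv 3
      simp [bdry, Matrix.mulVec, dotProduct, Fin.sum_univ_six, cons_val_five] at h0 h1 h2 h3
      rw [Submodule.mem_span_pair]
      refine ⟨v 0 + v 2, v 2, ?_⟩
      funext i
      fin_cases i <;>
        simp [alpha_eq, beta_eq, Pi.smul_apply, smul_eq_mul, cons_val_five] <;> omega
    · rw [Submodule.span_le]
      rintro x (rfl | rfl) <;>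
      · simp only [SetLike.mem_coe, LinearMap.mem_ker, Matrix.mulVecLin_apply]
        funext i
        fin_cases i <;>
          simp [bdry, alpha_eq, beta_eq, Matrix.mulVec, dotProduct,
            Fin.sum_univ_six, cons_val_five]
  · rw [LinearIndependent.pair_iff]
    intro s t h
    have h0 := congrFun h 0
    have h2 := congrFun h 2
    simp [alpha_eq, beta_eq, Pi.smul_apply, smul_eq_mul, cons_val_five] at h0 h2
    omega
  · simp [Bform, alpha_eq, Fin.sum_univ_six, cons_val_five]
  · simp [Bform, alpha_eq, beta_eq, Fin.sum_univ_six, cons_val_five]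
  · simp [Bform, alpha_eq, beta_eq, Fin.sum_univ_six, cons_val_five]
  · simp [Bform, beta_eq, Fin.sum_univ_six, cons_val_five]
  · intro a b hab
    have : Bform (a • alphaT2 + b • betaT2) (a • alphaT2 + b • betaT2)
        = -4*a^2 + 4*a*b - 4*b^2 := by
      simp [Bform, alpha_eq, beta_eq, Fin.sum_univ_six, cons_val_five, Pi.add_apply, Pi.smul_apply,
        smul_eq_mul]
      ring
    rw [this]
    rcases hab with ha | hb
    · nlinarith [sq_nonneg (a - b), sq_nonneg b, sq_nonneg a, sq_abs a, abs_pos.mpr ha]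
    · nlinarith [sq_nonneg (a - b), sq_nonneg b, sq_nonneg a, sq_abs b, abs_pos.mpr hb]
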